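/- Let h : ℝ → ℝ be continuous. If ∫₀ˣ (x − t)⁶ h(t) dt = 0 for every x ∈ [0, 1], then h(t) = 0 for every t ∈ [0, 1]. -/

import Mathlib

open intervalIntegral Finset Set

-- FTC for moment integrals
lemma hasDerivAt_G (h : ℝ → ℝ) (hc : Continuous h) (m : ℕ) (x : ℝ) :
    HasDerivAt (fun y => ∫ t in (0:ℝ)..y, t ^ m * h t) (x ^ m * h x) x := by
  have hcont : Continuous fun t : ℝ => t ^ m * h t := (continuous_pow m).mul hc
  exact intervalIntegral.integral_hasDerivAt_right (hcont.intervalIntegrable _ _)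
    (hcont.stronglyMeasurableAtFilter _ _) hcont.continuousAt

-- binomial expansion of the kernel integral
lemma P_eq (h : ℝ → ℝ) (hc : Continuous h) (k : ℕ) (x : ℝ) :
    (∫ t in (0:ℝ)..x, (x - t) ^ k * h t)
      = ∑ j ∈ range (k+1),
          ((k.choose j : ℝ) * (-1) ^ (k - j) * x ^ j) * ∫ t in (0:ℝ)..x, t ^ (k-j) * h t := by
  have h1 : ∀ t : ℝ, (x - t) ^ k * h t
      = ∑ j ∈ range (k+1), ((k.choose j : ℝ) * (-1) ^ (k - j) * x ^ j) * (t ^ (k-j) * h t) := by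
    intro t
    rw [sub_eq_add_neg, add_pow, Finset.sum_mul]
    refine Finset.sum_congr rfl fun j hj => ?_
    rw [neg_pow]
    ring
  calc (∫ t in (0:ℝ)..x, (x - t) ^ k * h t)
      = ∫ t in (0:ℝ)..x, ∑ j ∈ range (k+1),
          ((k.choose j : ℝ) * (-1) ^ (k - j) * x ^ j) * (t ^ (k-j) * h t) := by
        simp_rw [h1]
    _ = ∑ j ∈ range (k+1), ∫ t in (0:ℝ)..x,
          ((k.choose j : ℝ) * (-1) ^ (k - j) * x ^ j) * (t ^ (k-j) * h t) := by
        apply intervalIntegral.integral_finset_sum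
        intro j hj
        exact (Continuous.intervalIntegrable (by continuity) _ _)
    _ = _ := by
        refine Finset.sum_congr rfl fun j hj => ?_
        rw [intervalIntegral.integral_const_mul]

lemma sum_zero_key (k : ℕ) (x H : ℝ) :
    ∑ j ∈ range (k+2), (((k+1).choose j : ℝ) * (-1) ^ (k+1-j)) * (x ^ j * (x ^ (k+1-j) * H)) = 0 := by
  have hap : (x + (-x)) ^ (k+1)
      = ∑ j ∈ range (k+2), x ^ j * (-x) ^ (k+1-j) * ((k+1).choose j : ℝ) := add_pow x (-x) (k+1)
  have h0 : (0:ℝ) = ∑ j ∈ range (k+2), (((k+1).choose j : ℝ) * (-1) ^ (k+1-j))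
      * (x ^ j * x ^ (k+1-j)) := by
    calc (0:ℝ) = (x + (-x)) ^ (k+1) := by simp
      _ = _ := by
        rw [hap]
        refine Finset.sum_congr rfl fun j hj => ?_
        rw [neg_pow]
        ring
  calc ∑ j ∈ range (k+2), (((k+1).choose j : ℝ) * (-1) ^ (k+1-j)) * (x ^ j * (x ^ (k+1-j) * H))
      = (∑ j ∈ range (k+2), (((k+1).choose j : ℝ) * (-1) ^ (k+1-j)) * (x ^ j * x ^ (k+1-j))) * H := by
        rw [Finset.sum_mul]; exact Finset.sum_congr rfl fun j hj => by ring
    _ = 0 := by rw [← h0]; ring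

lemma sum_key (k : ℕ) (x H : ℝ) (G : ℕ → ℝ) :
    ∑ j ∈ range (k+2), (((k+1).choose j : ℝ) * (-1) ^ (k+1-j)) *
      ((j:ℝ) * x ^ (j-1) * G (k+1-j) + x ^ j * (x ^ (k+1-j) * H))
    = ((k:ℝ)+1) * ∑ j ∈ range (k+1), ((k.choose j : ℝ) * (-1) ^ (k-j) * x ^ j) * G (k-j) := by
  calc ∑ j ∈ range (k+2), (((k+1).choose j : ℝ) * (-1) ^ (k+1-j)) *
        ((j:ℝ) * x ^ (j-1) * G (k+1-j) + x ^ j * (x ^ (k+1-j) * H))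
      = (∑ j ∈ range (k+2), (((k+1).choose j : ℝ) * (-1) ^ (k+1-j)) *
          ((j:ℝ) * x ^ (j-1) * G (k+1-j)))
        + ∑ j ∈ range (k+2), (((k+1).choose j : ℝ) * (-1) ^ (k+1-j)) *
          (x ^ j * (x ^ (k+1-j) * H)) := by
        rw [← Finset.sum_add_distrib]
        exact Finset.sum_congr rfl fun j hj => by ring
    _ = ∑ j ∈ range (k+2), (((k+1).choose j : ℝ) * (-1) ^ (k+1-j)) *
          ((j:ℝ) * x ^ (j-1) * G (k+1-j)) := by rw [sum_zero_key, add_zero]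
    _ = ∑ i ∈ range (k+1), (((k+1).choose (i+1) : ℝ) * (-1) ^ (k-i)) *
          (((i:ℝ)+1) * x ^ i * G (k-i)) := by
        rw [Finset.sum_range_succ'
          (fun j => (((k+1).choose j : ℝ) * (-1) ^ (k+1-j)) * ((j:ℝ) * x ^ (j-1) * G (k+1-j)))]
        simp only [Nat.cast_zero, zero_mul, mul_zero, add_zero]
        refine Finset.sum_congr rfl fun i hi => ?_
        have e1 : k + 1 - (i + 1) = k - i := by omega
        have e2 : i + 1 - 1 = i := by omega
        rw [e1, e2]
        push_cast
        ring
    _ = ((k:ℝ)+1) * ∑ j ∈ range (k+1), ((k.choose j : ℝ) * (-1) ^ (k-j) * x ^ j) * G (k-j) := by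
        rw [Finset.mul_sum]
        refine Finset.sum_congr rfl fun i hi => ?_
        have hcho : ((k+1).choose (i+1) : ℝ) * ((i:ℝ)+1) = ((k:ℝ)+1) * (k.choose i : ℝ) := by
          have hcast : (((k+1) * k.choose i : ℕ) : ℝ) = (((k+1).choose (i+1) * (i+1) : ℕ) : ℝ) := by
            exact_mod_cast congrArg (Nat.cast (R := ℝ)) (Nat.add_one_mul_choose_eq k i)
          push_cast at hcast
          linarith
        linear_combination ((-1:ℝ) ^ (k-i) * x ^ i * G (k-i)) * hcho

lemma hasDerivAt_P (h : ℝ → ℝ) (hc : Continuous h) (k : ℕ) (x : ℝ) :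
    HasDerivAt (fun y => ∫ t in (0:ℝ)..y, (y - t) ^ (k+1) * h t)
      (((k:ℝ)+1) * ∫ t in (0:ℝ)..x, (x - t) ^ k * h t) x := by
  have heq : (fun y => ∫ t in (0:ℝ)..y, (y - t) ^ (k+1) * h t)
      = fun y => ∑ j ∈ range (k+2),
          (((k+1).choose j : ℝ) * (-1) ^ (k+1-j) * y ^ j) * ∫ t in (0:ℝ)..y, t ^ (k+1-j) * h t :=
    funext fun y => P_eq h hc (k+1) y
  rw [heq, P_eq h hc k x]
  have hd : ∀ j ∈ range (k+2),
      HasDerivAt (fun y => (((k+1).choose j : ℝ) * (-1) ^ (k+1-j) * y ^ j)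
          * ∫ t in (0:ℝ)..y, t ^ (k+1-j) * h t)
        ((((k+1).choose j : ℝ) * (-1) ^ (k+1-j)) *
          ((j : ℝ) * x ^ (j-1) * (∫ t in (0:ℝ)..x, t ^ (k+1-j) * h t)
            + x ^ j * (x ^ (k+1-j) * h x))) x := by
    intro j hj
    have h1 : HasDerivAt (fun y : ℝ => y ^ j) ((j:ℝ) * x ^ (j-1)) x := hasDerivAt_pow j x
    have h2 := hasDerivAt_G h hc (k+1-j) x
    have h3 := (h1.const_mul (((k+1).choose j : ℝ) * (-1) ^ (k+1-j))).fun_mul h2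
    refine h3.congr_deriv ?_
    ring
  have hsum := HasDerivAt.fun_sum hd
  refine hsum.congr_deriv ?_
  exact (sum_key k x (h x) (fun m => ∫ t in (0:ℝ)..x, t ^ m * h t))

-- derivative of a function vanishing on Icc 0 1 vanishes there
lemma step (f g : ℝ → ℝ) (hf : ∀ x, HasDerivAt f (g x) x)
    (h0 : ∀ x ∈ Set.Icc (0:ℝ) 1, f x = 0) : ∀ x ∈ Set.Icc (0:ℝ) 1, g x = 0 := by
  intro x hx
  have hu : UniqueDiffWithinAt ℝ (Set.Icc (0:ℝ) 1) x := (uniqueDiffOn_Icc one_pos) x hx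
  have h1 : derivWithin f (Set.Icc (0:ℝ) 1) x = g x :=
    ((hf x).hasDerivWithinAt).derivWithin hu
  have h2 : derivWithin f (Set.Icc (0:ℝ) 1) x = 0 := by
    rw [derivWithin_congr h0 (h0 x hx)]
    exact congrFun (derivWithin_fun_const (c := (0:ℝ)) (s := Set.Icc (0:ℝ) 1)) x
  rw [← h1, h2]

/-- If `h` is continuous and `∫₀ˣ (x - t)^6 h(t) dt = 0` for every `x ∈ [0,1]`,
then `h` vanishes on `[0,1]`. -/
theorem kernel_integral_vanishing (h : ℝ → ℝ) (hc : Continuous h)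
    (hint : ∀ x ∈ Set.Icc (0 : ℝ) 1, ∫ t in (0 : ℝ)..x, (x - t) ^ 6 * h t = 0) :
    ∀ t ∈ Set.Icc (0 : ℝ) 1, h t = 0 := by
  have desc : ∀ k : ℕ, (∀ x ∈ Set.Icc (0:ℝ) 1, ∫ t in (0:ℝ)..x, (x - t) ^ (k+1) * h t = 0) →
      ∀ x ∈ Set.Icc (0:ℝ) 1, ∫ t in (0:ℝ)..x, (x - t) ^ k * h t = 0 := by
    intro k hk x hx
    have := step (fun y => ∫ t in (0:ℝ)..y, (y - t) ^ (k+1) * h t)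
      (fun y => ((k:ℝ)+1) * ∫ t in (0:ℝ)..y, (y - t) ^ k * h t)
      (fun y => hasDerivAt_P h hc k y) hk x hx
    have hk1 : ((k:ℝ)+1) ≠ 0 := by positivity
    exact (mul_eq_zero.mp this).resolve_left hk1
  have q5 := desc 5 hint
  have q4 := desc 4 q5
  have q3 := desc 3 q4
  have q2 := desc 2 q3
  have q1 := desc 1 q2
  have q0 := desc 0 q1
  simp only [pow_zero, one_mul] at q0
  intro t ht
  refine step (fun y => ∫ s in (0:ℝ)..y, h s) h (fun y => ?_) q0 t ht
  exact intervalIntegral.integral_hasDerivAt_right (hc.intervalIntegrable _ _)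
    (hc.stronglyMeasurableAtFilter _ _) hc.continuousAt
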